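/- Let (Ω, 𝒜, μ) be a standard Borel probability space. For each n ≥ 0 let ~_n be an equivalence relation on Ω that is measurable as a subset of Ω × Ω, and let ~ be an equivalence relation on Ω, measurable as a subset of Ω × Ω, that is finer than every ~_n (i.e., x ~ y implies x ~_n y for all n). Assume (~_n) converges pointwise to ~: for all x, y ∈ Ω there exists N such that for all n ≥ N, x ~_n y if and only if x ~ y. For an equivalence relation σ with measurable graph, define H_μ(σ) = ∫_Ω −log₂ μ(σ[x]) dμ(x) ∈ [0, ∞], where σ[x] denotes the equivalence class of x and −log₂ 0 = +∞. Then H_μ(~_n) → H_μ(~) as n → ∞. -/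

import Mathlib

/-!
Convergence of entropies along a converging refining sequence of measurable
equivalence relations (Lemma "lemCVEntropy" of the paper).
-/

open MeasureTheory Filter Topology
open scoped ENNReal

namespace GalledB2

open Classical in
/-- The entropy `H_μ(σ) = ∫ −log₂ μ(σ[x]) dμ(x) ∈ [0,∞]` of an equivalence relation
`σ` (given by the binary predicate `r`), with the convention `−log₂ 0 = +∞`. -/
noncomputable def relEnt {Ω : Type*} [MeasurableSpace Ω] (μ : Measure Ω)
    (r : Ω → Ω → Prop) : ℝ≥0∞ :=
  ∫⁻ x,
    (if μ {y | r x y} = 0 then (⊤ : ℝ≥0∞)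
     else ENNReal.ofReal (- Real.logb 2 (μ {y | r x y}).toReal)) ∂μ

/-- **Theorem.** On a standard Borel probability space, if the measurable equivalence
relations `r n` are all coarser than the measurable equivalence relation `rl` and
converge pointwise to it, then `H_μ(r n) → H_μ(rl)`. -/
theorem relEnt_tendsto {Ω : Type*} [MeasurableSpace Ω] [StandardBorelSpace Ω]
    (μ : Measure Ω) [IsProbabilityMeasure μ]
    (r : ℕ → Ω → Ω → Prop) (rl : Ω → Ω → Prop)
    (hr : ∀ n, Equivalence (r n)) (hrl : Equivalence rl)
    (hrmeas : ∀ n, MeasurableSet {p : Ω × Ω | r n p.1 p.2})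
    (hrlmeas : MeasurableSet {p : Ω × Ω | rl p.1 p.2})
    (hfiner : ∀ n x y, rl x y → r n x y)
    (hconv : ∀ x y, ∃ N, ∀ n ≥ N, (r n x y ↔ rl x y)) :
    Tendsto (fun n => relEnt μ (r n)) atTop (𝓝 (relEnt μ rl)) := by
  classical
  -- section sets
  set S : ℕ → Ω → Set Ω := fun n x => {y | r n x y} with hS
  set L : Ω → Set Ω := fun x => {y | rl x y} with hL
  have hSmeas : ∀ n x, MeasurableSet (S n x) :=
    fun n x => (hrmeas n).preimage (measurable_prodMk_left (x := x))
  have hLmeas : ∀ x, MeasurableSet (L x) :=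
    fun x => hrlmeas.preimage (measurable_prodMk_left (x := x))
  have hsub : ∀ n x, L x ⊆ S n x := fun n x y hy => hfiner n x y hy
  have hgmeas : ∀ n, Measurable fun x => μ (S n x) :=
    fun n => measurable_measure_prodMk_left (hrmeas n)
  -- pointwise convergence of measures of classes
  have hmconv : ∀ x, Tendsto (fun n => μ (S n x)) atTop (𝓝 (μ (L x))) := by
    intro x
    have h1 : ∀ n, μ (S n x) = ∫⁻ y, (S n x).indicator (fun _ => 1) y ∂μ := fun n =>
      (lintegral_indicator_one (hSmeas n x)).symm
    have h2 : μ (L x) = ∫⁻ y, (L x).indicator (fun _ => 1) y ∂μ :=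
      (lintegral_indicator_one (hLmeas x)).symm
    simp only [h1, h2]
    refine tendsto_lintegral_of_dominated_convergence (fun _ => 1)
      (fun n => measurable_one.indicator (hSmeas n x))
      (fun n => ae_of_all _ fun y => ?_) ?_ (ae_of_all _ fun y => ?_)
    · exact Set.indicator_le_self _ _ y
    · simp
    · obtain ⟨N, hN⟩ := hconv x y
      refine tendsto_atTop_of_eventually_const (i₀ := N) fun n hn => ?_
      by_cases hy : y ∈ L x
      · rw [Set.indicator_of_mem hy,
          Set.indicator_of_mem (show y ∈ S n x from (hN n hn).mpr hy)]
      · rw [Set.indicator_of_notMem hy,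
          Set.indicator_of_notMem (show y ∉ S n x from fun h => hy ((hN n hn).mp h))]
  -- the integrands
  set F : ℕ → Ω → ℝ≥0∞ := fun n x =>
    if μ (S n x) = 0 then (⊤ : ℝ≥0∞)
    else ENNReal.ofReal (- Real.logb 2 (μ (S n x)).toReal) with hF
  set Fl : Ω → ℝ≥0∞ := fun x =>
    if μ (L x) = 0 then (⊤ : ℝ≥0∞)
    else ENNReal.ofReal (- Real.logb 2 (μ (L x)).toReal) with hFl
  have hrel : ∀ n, relEnt μ (r n) = ∫⁻ x, F n x ∂μ := fun n => rfl
  have hrell : relEnt μ rl = ∫⁻ x, Fl x ∂μ := rfl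
  -- pointwise convergence of the integrands
  have hFconv : ∀ x, Tendsto (fun n => F n x) atTop (𝓝 (Fl x)) := by
    intro x
    by_cases h0 : μ (L x) = 0
    · -- limit class is null : entropies blow up to ⊤
      have hFlx : Fl x = ⊤ := by simp [hFl, h0]
      rw [hFlx]
      refine ENNReal.tendsto_nhds_top fun m => ?_
      have hcpos : (0 : ℝ) < (2 : ℝ) ^ (-((m : ℝ) + 1)) :=
        Real.rpow_pos_of_pos (by norm_num) _
      have hε : (0 : ℝ≥0∞) < ENNReal.ofReal ((2 : ℝ) ^ (-((m : ℝ) + 1))) :=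
        ENNReal.ofReal_pos.mpr hcpos
      have hev : ∀ᶠ n in atTop,
          μ (S n x) < ENNReal.ofReal ((2 : ℝ) ^ (-((m : ℝ) + 1))) := by
        refine (hmconv x).eventually_lt_const ?_
        rw [h0]; exact hε
      filter_upwards [hev] with n hn
      by_cases hz : μ (S n x) = 0
      · simp [hF, hz]
      · have hne : μ (S n x) ≠ ⊤ := measure_ne_top μ _
        have htpos : 0 < (μ (S n x)).toReal :=
          ENNReal.toReal_pos hz hne
        have htlt : (μ (S n x)).toReal < (2 : ℝ) ^ (-((m : ℝ) + 1)) :=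
          (ENNReal.lt_ofReal_iff_toReal_lt hne).mp hn
        have hlog : Real.logb 2 (μ (S n x)).toReal < -((m : ℝ) + 1) := by
          calc Real.logb 2 (μ (S n x)).toReal
              < Real.logb 2 ((2 : ℝ) ^ (-((m : ℝ) + 1))) :=
                Real.logb_lt_logb (by norm_num) htpos htlt
            _ = -((m : ℝ) + 1) := Real.logb_rpow (by norm_num) (by norm_num)
        have hm : (m : ℝ) < - Real.logb 2 (μ (S n x)).toReal := by linarith
        have : (m : ℝ≥0∞) < ENNReal.ofReal (- Real.logb 2 (μ (S n x)).toReal) := by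
          rw [show ((m : ℝ≥0∞)) = ENNReal.ofReal (m : ℝ) by
            simp [ENNReal.ofReal_natCast]]
          exact (ENNReal.ofReal_lt_ofReal_iff_of_nonneg (Nat.cast_nonneg m)).mpr hm
        simpa [hF, hz] using this
    · -- limit class has positive measure
      have hposn : ∀ n, μ (S n x) ≠ 0 := fun n hz =>
        h0 (le_antisymm (hz ▸ measure_mono (hsub n x)) zero_le)
      have hne : μ (L x) ≠ ⊤ := measure_ne_top μ _
      have htne : (μ (L x)).toReal ≠ 0 := (ENNReal.toReal_pos h0 hne).ne'
      have htconv : Tendsto (fun n => (μ (S n x)).toReal) atTop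
          (𝓝 (μ (L x)).toReal) :=
        (ENNReal.tendsto_toReal hne).comp (hmconv x)
      have hcont : ContinuousAt (fun t : ℝ => ENNReal.ofReal (- Real.logb 2 t))
          (μ (L x)).toReal :=
        ENNReal.continuous_ofReal.continuousAt.comp
          (Real.continuousAt_logb htne).neg
      have := hcont.tendsto.comp htconv
      simp only [hF, hFl, hposn, h0, if_neg, Function.comp] at this ⊢
      exact this
  -- the integrands are dominated by the limit integrand
  have hFle : ∀ n x, F n x ≤ Fl x := by
    intro n x
    by_cases h0 : μ (L x) = 0
    · simp [hFl, h0]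
    · have hz : μ (S n x) ≠ 0 := fun hz =>
        h0 (le_antisymm (hz ▸ measure_mono (hsub n x)) zero_le)
      have hne : μ (L x) ≠ ⊤ := measure_ne_top μ _
      have hnen : μ (S n x) ≠ ⊤ := measure_ne_top μ _
      have htle : (μ (L x)).toReal ≤ (μ (S n x)).toReal :=
        ENNReal.toReal_mono hnen (measure_mono (hsub n x))
      have htpos : 0 < (μ (L x)).toReal := ENNReal.toReal_pos h0 hne
      have hlog : Real.logb 2 (μ (L x)).toReal ≤ Real.logb 2 (μ (S n x)).toReal :=
        Real.logb_le_logb_of_le (by norm_num) htpos htle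
      simp only [hF, hFl, if_neg h0, if_neg hz]
      exact ENNReal.ofReal_le_ofReal (by linarith)
  -- measurability of the integrands
  have hFmeas : ∀ n, Measurable (F n) := by
    intro n
    refine Measurable.ite ((hgmeas n) (measurableSet_singleton 0)) measurable_const ?_
    exact ENNReal.measurable_ofReal.comp
      (((Real.measurable_log.div_const _).comp (hgmeas n).ennreal_toReal).neg)
  -- conclude by Fatou + monotone domination
  rw [funext hrel, hrell]
  refine tendsto_of_le_liminf_of_limsup_le ?_ ?_
  · calc ∫⁻ x, Fl x ∂μ = ∫⁻ x, liminf (fun n => F n x) atTop ∂μ := by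
          refine lintegral_congr fun x => ?_
          exact ((hFconv x).liminf_eq).symm
      _ ≤ liminf (fun n => ∫⁻ x, F n x ∂μ) atTop := lintegral_liminf_le hFmeas
  · exact limsup_le_of_le (by isBoundedDefault)
      (Eventually.of_forall fun n => lintegral_mono (hFle n))

end GalledB2
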